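/- Aubin continuity of the solution mapping. Let P, X, Y be metric spaces, F: P×X ⇉ Y a set-valued mapping with nonempty values, C ⊆ Y a nonempty closed set, and (p̄,x̄) ∈ P×X. Suppose: (i) X is metrically complete; (ii) x̄ ∈ Solv(p̄); (iii) p ↦ ν_{F,C}(p,x̄) is upper semicontinuous at p̄; (iv) there exists δ₁ > 0 such that for every p ∈ B(p̄,δ₁) the mapping x ↦ F(p,x) is l.s.c. on X; (v) there exists δ₂ > 0 such that σ∇ = inf{ |∇ₓν_{F,C}|(p,x) : (p,x) ∈ B(p̄,δ₂)×B(x̄,δ₂), F(p,x) ⊄ C } > 0; (vi) there exist τ, s, ℓ > 0 such that for every x ∈ B(x̄,s) the mapping p ↦ F(p,x) is Lipschitz continuous with rate ℓ on B(p̄,τ) with respect to the Pompeiu–Hausdorff distance. Then p̄ belongs to the interior of dom Solv, Solv is Aubin continuous at (p̄,x̄), and lip Solv(p̄,x̄) ≤ ℓ/σ∇. -/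

import Mathlib

open Classical Metric Filter Set
open scoped ENNReal Topology

/-- Excess of `A` over `C`: `e(A,C) = sup_{a ∈ A} dist(a,C)`. -/
noncomputable def exc {Y : Type*} [PseudoEMetricSpace Y] (A C : Set Y) : ℝ≥0∞ :=
  ⨆ y ∈ A, EMetric.infEdist y C

/-- Partial strong slope with respect to `x` of `ν : P × X → [0,∞]`. -/
noncomputable def slopeX {P X : Type*} [PseudoMetricSpace P] [PseudoMetricSpace X]
    (ν : P → X → ℝ≥0∞) (p0 : P) (x0 : X) : ℝ≥0∞ :=
  if IsLocalMin (fun q : P × X => ν q.1 q.2) (p0, x0) then 0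
  else Filter.limsup (fun x => (ν p0 x0 - ν p0 x) / edist x x0) (𝓝[≠] x0)

/-- A set-valued mapping `Φ` is l.s.c. at `x0`. -/
def SVLscAt {X Y : Type*} [PseudoMetricSpace X] [TopologicalSpace Y]
    (Φ : X → Set Y) (x0 : X) : Prop :=
  ∀ V : Set Y, IsOpen V → (Φ x0 ∩ V).Nonempty →
    ∃ δ > (0:ℝ), ∀ x ∈ closedBall x0 δ, (Φ x ∩ V).Nonempty

/-- `Φ : P ⇉ X` is Aubin continuous at `(pbar,xbar)` with rate `κ > 0`. -/
def AubinWith {P X : Type*} [PseudoMetricSpace P] [PseudoMetricSpace X]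
    (Φ : P → Set X) (pbar : P) (xbar : X) (κ : ℝ) : Prop :=
  0 < κ ∧ ∃ δ > (0:ℝ), ∃ r > (0:ℝ), ∀ p₁ ∈ closedBall pbar δ, ∀ p₂ ∈ closedBall pbar δ,
    ∀ x ∈ Φ p₂ ∩ closedBall xbar r,
      EMetric.infEdist x (Φ p₁) ≤ ENNReal.ofReal (κ * dist p₁ p₂)

/-- Modulus of Aubin continuity: the infimum of the admissible rates. -/
noncomputable def aubinMod {P X : Type*} [PseudoMetricSpace P] [PseudoMetricSpace X]
    (Φ : P → Set X) (pbar : P) (xbar : X) : ℝ≥0∞ :=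
  ⨅ κ ∈ {κ : ℝ | AubinWith Φ pbar xbar κ}, ENNReal.ofReal κ

lemma ekeland_min {X : Type*} [MetricSpace X] [CompleteSpace X] (f : X → ℝ≥0∞)
    (hf : LowerSemicontinuous f) (σ : ℝ≥0∞) (hσ0 : σ ≠ 0) (hσt : σ ≠ ∞)
    (x₀ : X) (hx₀ : f x₀ ≠ ∞) :
    ∃ z : X, (f z + σ * edist z x₀ ≤ f x₀) ∧
      ∀ x : X, f x + σ * edist x z ≤ f z → x = z := by
  set R : X → X → Prop := fun a b => f a + σ * edist a b ≤ f b with hR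
  have hRrefl : ∀ a, R a a := by intro a; simp [hR]
  have hRle : ∀ {a b}, R a b → f a ≤ f b := fun {a b} h =>
    le_trans (le_add_right le_rfl) h
  have hRtrans : ∀ {a b c}, R a b → R b c → R a c := by
    intro a b c hab hbc
    calc f a + σ * edist a c ≤ f a + σ * (edist a b + edist b c) := by
          gcongr; exact edist_triangle _ _ _
      _ = (f a + σ * edist a b) + σ * edist b c := by ring
      _ ≤ f b + σ * edist b c := add_le_add_left hab _
      _ ≤ f c := hbc
  -- step
  have step : ∀ (n : ℕ) (x : {x : X // f x ≠ ∞}), ∃ y : {x : X // f x ≠ ∞},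
      R y.1 x.1 ∧ f y.1 ≤ (⨅ z : {z : X // R z x.1}, f z.1) + (2:ℝ≥0∞)⁻¹ ^ n := by
    intro n x
    have hne : Nonempty {z : X // R z x.1} := ⟨⟨x.1, hRrefl _⟩⟩
    have hinf : (⨅ z : {z : X // R z x.1}, f z.1) < (⨅ z : {z : X // R z x.1}, f z.1) + (2:ℝ≥0∞)⁻¹ ^ n := by
      refine ENNReal.lt_add_right ?_ (pow_ne_zero _ (by norm_num))
      exact ne_top_of_le_ne_top x.2 (iInf_le_of_le ⟨x.1, hRrefl _⟩ le_rfl)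
    obtain ⟨⟨y, hy⟩, hy2⟩ := iInf_lt_iff.1 hinf
    exact ⟨⟨y, ne_top_of_le_ne_top x.2 (hRle hy)⟩, hy, hy2.le⟩
  choose g hg1 hg2 using step
  let u : ℕ → {x : X // f x ≠ ∞} := fun n => Nat.rec ⟨x₀, hx₀⟩ g n
  have hu : ∀ n, u (n + 1) = g n (u n) := fun n => rfl
  have h1 : ∀ n, R (u (n + 1)).1 (u n).1 := fun n => hg1 n (u n)
  have hchain : ∀ n m, n ≤ m → R (u m).1 (u n).1 := by
    intro n m h
    induction m, h using Nat.le_induction with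
    | base => exact hRrefl _
    | succ m hm ih => exact hRtrans (h1 m) ih
  set L : ℝ≥0∞ := ⨅ n, f (u n).1 with hLdef
  have hanti : Antitone fun n => f (u n).1 :=
    antitone_nat_of_succ_le fun n => hRle (h1 n)
  have htend : Tendsto (fun n => f (u n).1) atTop (𝓝 L) := tendsto_atTop_iInf hanti
  have hLle : ∀ n, L ≤ f (u n).1 := fun n => iInf_le _ n
  have hLtop : L ≠ ∞ := ne_top_of_le_ne_top hx₀ (hLle 0)
  -- Cauchy
  have hkey : ∀ N m n, N ≤ n → n ≤ m → σ * edist (u m).1 (u n).1 ≤ f (u N).1 - L := by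
    intro N m n hNn hnm
    have h := hchain n m hnm
    have h2 : σ * edist (u m).1 (u n).1 ≤ f (u n).1 - f (u m).1 := by
      have h' : f (u m).1 + σ * edist (u m).1 (u n).1 ≤ f (u n).1 := h
      exact ENNReal.le_sub_of_add_le_left (ne_top_of_le_ne_top hx₀ (hRle (hchain 0 m (Nat.zero_le m)))) h'
    exact h2.trans (tsub_le_tsub (hanti hNn) (hLle m))
  have hCauchy : CauchySeq fun n => (u n).1 := by
    rw [EMetric.cauchySeq_iff]
    intro ε hε
    set m' : ℝ≥0∞ := min ε 1 with hm'
    have hm'0 : m' ≠ 0 := (lt_min hε zero_lt_one).ne'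
    have hm't : m' ≠ ∞ := ne_top_of_le_ne_top ENNReal.one_ne_top (min_le_right _ _)
    have hδv0 : (0:ℝ≥0∞) < σ * (m' / 2) := by
      refine ENNReal.mul_pos hσ0 ?_
      simp [ENNReal.div_eq_zero_iff, hm'0]
    have hev : ∀ᶠ n in atTop, f (u n).1 < L + σ * (m' / 2) :=
      htend.eventually_lt_const (ENNReal.lt_add_right hLtop hδv0.ne')
    obtain ⟨N, hN⟩ := hev.exists_forall_of_atTop
    refine ⟨N, fun m hm n hn => ?_⟩
    have key : ∀ a b, N ≤ a → a ≤ b → edist (u b).1 (u a).1 < ε := by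
      intro a b ha hab
      have h1' : σ * edist (u b).1 (u a).1 ≤ f (u N).1 - L := hkey N b a ha hab
      have h2' : f (u N).1 - L ≤ σ * (m' / 2) := by
        have := (hN N le_rfl).le
        exact tsub_le_iff_right.2 (by rwa [add_comm] at this)
      have h3' : σ * edist (u b).1 (u a).1 ≤ σ * (m' / 2) := h1'.trans h2'
      have h4' : edist (u b).1 (u a).1 ≤ m' / 2 :=
        (ENNReal.mul_le_mul_iff_right hσ0 hσt).1 h3'
      calc edist (u b).1 (u a).1 ≤ m' / 2 := h4'
        _ < m' := ENNReal.half_lt_self hm'0 hm't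
        _ ≤ ε := min_le_left _ _
    rcases le_total m n with h | h
    · rw [edist_comm]; exact key m n hm h
    · exact key n m hn h
  obtain ⟨z, hz⟩ := cauchySeq_tendsto_of_complete hCauchy
  -- z ≼ u n for all n
  have hRz : ∀ n, R z (u n).1 := by
    intro n
    by_contra hc
    have hlt : f (u n).1 < f z + σ * edist z (u n).1 := lt_of_not_ge hc
    have hcont : Continuous fun y : X => σ * edist y (u n).1 :=
      (ENNReal.continuous_const_mul hσt).comp (continuous_id.edist continuous_const)
    have hlsc : LowerSemicontinuousAt (fun y => f y + σ * edist y (u n).1) z :=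
      LowerSemicontinuousAt.add (hf z) (hcont.lowerSemicontinuous z)
    have hev := hlsc _ hlt
    have hev2 := hz.eventually hev
    obtain ⟨m, hm1, hm2⟩ := (hev2.and (eventually_ge_atTop n)).exists
    exact absurd (hchain n m hm2) (not_le.2 hm1)
  have hfz_le : ∀ n, f z ≤ f (u n).1 := fun n => hRle (hRz n)
  refine ⟨z, hRz 0, ?_⟩
  intro x hx
  have hxz : ∀ n, R x (u n).1 := fun n => hRtrans hx (hRz n)
  have hLx : L ≤ f x := by
    have h5 : ∀ n, L ≤ f x + (2:ℝ≥0∞)⁻¹ ^ n := by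
      intro n
      refine (hLle (n+1)).trans ?_
      refine (hg2 n (u n)).trans ?_
      exact add_le_add_left (iInf_le (fun z : {z : X // R z (u n).1} => f z.1) ⟨x, hxz n⟩) _
    have htend2 : Tendsto (fun n : ℕ => f x + (2:ℝ≥0∞)⁻¹ ^ n) atTop (𝓝 (f x)) := by
      have := ENNReal.tendsto_pow_atTop_nhds_zero_of_lt_one
        (by norm_num : (2:ℝ≥0∞)⁻¹ < 1)
      simpa using tendsto_const_nhds.add this
    exact ge_of_tendsto' htend2 h5
  have hfzL : f z ≤ L := le_iInf hfz_le
  have hchain2 : f x + σ * edist x z ≤ f x := (hx.trans hfzL).trans hLx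
  have hfx_top : f x ≠ ∞ := ne_top_of_le_ne_top hx₀ ((hRle hx).trans (hfz_le 0))
  have hze : σ * edist x z = 0 := by
    by_contra hne
    exact absurd hchain2 (not_le.2 (ENNReal.lt_add_right hfx_top hne))
  rcases mul_eq_zero.1 hze with h | h
  · exact absurd h hσ0
  · exact edist_eq_zero.1 h

lemma lsc_exc {X Y : Type*} [MetricSpace X] [MetricSpace Y]
    (Φ : X → Set Y) (C : Set Y) (h : ∀ x, SVLscAt Φ x) :
    LowerSemicontinuous fun x => exc (Φ x) C := by
  intro x b hb
  simp only [exc, lt_iSup_iff] at hb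
  obtain ⟨y, hy, hby⟩ := hb
  have hV : IsOpen {y : Y | b < EMetric.infEdist y C} :=
    isOpen_lt continuous_const EMetric.continuous_infEdist
  obtain ⟨δ, hδ, hδ2⟩ := h x _ hV ⟨y, hy, hby⟩
  filter_upwards [closedBall_mem_nhds x hδ] with x' hx'
  obtain ⟨y', hy', hby'⟩ := hδ2 x' hx'
  exact lt_of_lt_of_le hby' (le_iSup₂ (f := fun y _ => EMetric.infEdist y C) y' hy')

lemma errorBound {P X Y : Type*} [MetricSpace P] [MetricSpace X] [CompleteSpace X]
    [MetricSpace Y]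
    (F : P → X → Set Y) (C : Set Y) (pbar : P) (xbar : X) (δ₂ : ℝ)
    (σ' : ℝ) (hσ' : 0 < σ')
    (hslope : ∀ p x, dist p pbar ≤ δ₂ → dist x xbar ≤ δ₂ → ¬ F p x ⊆ C →
      ENNReal.ofReal σ' < slopeX (fun p x => exc (F p x) C) p x)
    (p : P) (hp2 : dist p pbar ≤ δ₂)
    (hplsc : ∀ x, SVLscAt (F p) x)
    (a : ℝ) (ha : 0 ≤ a) (x₀ : X) (hx₀ : dist x₀ xbar + a ≤ δ₂)
    (hsmall : exc (F p x₀) C ≤ ENNReal.ofReal (σ' * a)) :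
    ∃ z, F p z ⊆ C ∧ ENNReal.ofReal σ' * edist z x₀ ≤ exc (F p x₀) C := by
  set f : X → ℝ≥0∞ := fun x => exc (F p x) C with hf
  set σ'' : ℝ≥0∞ := ENNReal.ofReal σ' with hσ''
  have hσ''0 : σ'' ≠ 0 := (ENNReal.ofReal_pos.2 hσ').ne'
  have hσ''t : σ'' ≠ ∞ := ENNReal.ofReal_ne_top
  have hlscf : LowerSemicontinuous f := lsc_exc (F p) C hplsc
  have hfx₀ : f x₀ ≠ ∞ := ne_top_of_le_ne_top ENNReal.ofReal_ne_top hsmall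
  obtain ⟨z, hz1, hz2⟩ := ekeland_min f hlscf σ'' hσ''0 hσ''t x₀ hfx₀
  have hez : σ'' * edist z x₀ ≤ f x₀ := le_trans le_add_self hz1
  refine ⟨z, ?_, hez⟩
  by_contra hbad
  -- z is in the δ₂-ball around xbar
  have hzd : dist z x₀ ≤ a := by
    have h1 : σ'' * edist z x₀ ≤ σ'' * ENNReal.ofReal a := by
      rw [hσ'', ← ENNReal.ofReal_mul hσ'.le]
      exact hez.trans hsmall
    have h2 : edist z x₀ ≤ ENNReal.ofReal a :=
      (ENNReal.mul_le_mul_iff_right hσ''0 hσ''t).1 h1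
    rw [edist_dist] at h2
    exact (ENNReal.ofReal_le_ofReal_iff ha).1 h2
  have hzball : dist z xbar ≤ δ₂ := by
    have := dist_triangle z x₀ xbar
    linarith
  have hsl := hslope p z hp2 hzball hbad
  rw [slopeX] at hsl
  split_ifs at hsl with hmin
  · exact absurd hsl (not_lt.2 zero_le')
  · have hev : ∀ᶠ x in 𝓝[≠] z,
        (exc (F p z) C - exc (F p x) C) / edist x z ≤ σ'' := by
      filter_upwards [eventually_mem_nhdsWithin] with x hx
      have hne : x ≠ z := hx
      have hR : ¬ (f x + σ'' * edist x z ≤ f z) := fun h => hne (hz2 x h)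
      have h1 : f z ≤ σ'' * edist x z + f x := by
        rw [add_comm]; exact (not_le.1 hR).le
      have h2 : f z - f x ≤ σ'' * edist x z := tsub_le_iff_right.2 h1
      have he0 : edist x z ≠ 0 := (edist_pos.2 hne).ne'
      have het : edist x z ≠ ∞ := edist_ne_top _ _
      calc (f z - f x) / edist x z ≤ σ'' * edist x z / edist x z :=
            ENNReal.div_le_div_right h2 _
        _ = σ'' := by
            rw [mul_div_assoc, ENNReal.div_self he0 het, mul_one]
    have hls := Filter.limsup_le_of_le (by isBoundedDefault) hev
    exact absurd hsl (not_lt.2 hls)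

/-- **Aubin continuity of the solution mapping** `Solv(p) = {x : F(p,x) ⊆ C}`. -/
theorem aubin_continuity_of_Solv
    {P X Y : Type*} [MetricSpace P] [MetricSpace X] [CompleteSpace X] [MetricSpace Y]
    (F : P → X → Set Y) (hFne : ∀ p x, (F p x).Nonempty)
    (C : Set Y) (hCne : C.Nonempty) (hCclosed : IsClosed C)
    (pbar : P) (xbar : X)
    (hsol : F pbar xbar ⊆ C)
    (husc : UpperSemicontinuousAt (fun p => exc (F p xbar) C) pbar)
    (hlsc : ∃ δ₁ > (0:ℝ), ∀ p ∈ closedBall pbar δ₁, ∀ x : X, SVLscAt (F p) x)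
    (δ₂ : ℝ) (hδ₂ : 0 < δ₂) (σ : ℝ≥0∞)
    (hσdef : σ = ⨅ q : {q : P × X // q.1 ∈ closedBall pbar δ₂ ∧ q.2 ∈ closedBall xbar δ₂ ∧
        ¬ F q.1 q.2 ⊆ C}, slopeX (fun p x => exc (F p x) C) q.val.1 q.val.2)
    (hσpos : 0 < σ)
    (τ s ℓ : ℝ) (hτ : 0 < τ) (hs : 0 < s) (hℓ : 0 < ℓ)
    (hlip : ∀ x ∈ closedBall xbar s, ∀ p₁ ∈ closedBall pbar τ, ∀ p₂ ∈ closedBall pbar τ,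
      EMetric.hausdorffEdist (F p₁ x) (F p₂ x) ≤ ENNReal.ofReal (ℓ * dist p₁ p₂)) :
    pbar ∈ interior {p : P | {x : X | F p x ⊆ C}.Nonempty} ∧
    (∃ κ : ℝ, AubinWith (fun p => {x : X | F p x ⊆ C}) pbar xbar κ) ∧
    aubinMod (fun p => {x : X | F p x ⊆ C}) pbar xbar ≤ ENNReal.ofReal ℓ / σ := by
  obtain ⟨δ₁, hδ₁, hlsc'⟩ := hlsc
  set Solv : P → Set X := fun p => {x : X | F p x ⊆ C} with hSolv
  have hslopeAll : ∀ σ' : ℝ, ENNReal.ofReal σ' < σ →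
      ∀ p x, dist p pbar ≤ δ₂ → dist x xbar ≤ δ₂ → ¬ F p x ⊆ C →
        ENNReal.ofReal σ' < slopeX (fun p x => exc (F p x) C) p x := by
    intro σ' hlt p x hp hx hbad
    refine lt_of_lt_of_le hlt ?_
    rw [hσdef]
    exact iInf_le (fun q : {q : P × X // q.1 ∈ closedBall pbar δ₂ ∧
      q.2 ∈ closedBall xbar δ₂ ∧ ¬ F q.1 q.2 ⊆ C} =>
        slopeX (fun p x => exc (F p x) C) q.val.1 q.val.2)
      ⟨(p, x), mem_closedBall.2 hp, mem_closedBall.2 hx, hbad⟩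
  -- The main construction: Aubin continuity with rate ℓ/σ' for every admissible σ'.
  have AUB : ∀ σ' : ℝ, 0 < σ' → ENNReal.ofReal σ' < σ →
      AubinWith Solv pbar xbar (ℓ / σ') := by
    intro σ' hσ' hσ'lt
    set r : ℝ := min s (δ₂ / 2) with hrdef
    have hr0 : 0 < r := lt_min hs (by linarith)
    have hrs : r ≤ s := min_le_left _ _
    have hrδ : r ≤ δ₂ / 2 := min_le_right _ _
    set a : ℝ := δ₂ - r with hadef
    have ha0 : 0 < a := by simp only [hadef]; linarith
    set δ : ℝ := min (min δ₁ δ₂) (min τ (σ' * a / (2 * ℓ))) with hδdef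
    have hδ0 : 0 < δ := lt_min (lt_min hδ₁ hδ₂) (lt_min hτ (by positivity))
    have hδδ₁ : δ ≤ δ₁ := le_trans (min_le_left _ _) (min_le_left _ _)
    have hδδ₂ : δ ≤ δ₂ := le_trans (min_le_left _ _) (min_le_right _ _)
    have hδτ : δ ≤ τ := le_trans (min_le_right _ _) (min_le_left _ _)
    have hδσ : δ ≤ σ' * a / (2 * ℓ) := le_trans (min_le_right _ _) (min_le_right _ _)
    refine ⟨div_pos hℓ hσ', δ, hδ0, r, hr0, ?_⟩
    intro p₁ hp₁ p₂ hp₂ x hx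
    obtain ⟨hxsol, hxball⟩ := hx
    have hxsol' : F p₂ x ⊆ C := hxsol
    have hp₁' : dist p₁ pbar ≤ δ := mem_closedBall.1 hp₁
    have hp₂' : dist p₂ pbar ≤ δ := mem_closedBall.1 hp₂
    have hxb' : dist x xbar ≤ r := mem_closedBall.1 hxball
    have hd12 : dist p₁ p₂ ≤ 2 * δ := by
      have := dist_triangle p₁ pbar p₂
      have h2 : dist pbar p₂ = dist p₂ pbar := dist_comm _ _
      linarith
    have hbound : exc (F p₁ x) C ≤ ENNReal.ofReal (ℓ * dist p₁ p₂) := by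
      calc exc (F p₁ x) C ≤ ⨆ y ∈ F p₁ x, EMetric.infEdist y (F p₂ x) :=
            iSup₂_mono fun y _ => EMetric.infEdist_anti hxsol'
        _ ≤ EMetric.hausdorffEdist (F p₁ x) (F p₂ x) :=
            iSup₂_le fun y hy => EMetric.infEdist_le_hausdorffEdist_of_mem hy
        _ ≤ ENNReal.ofReal (ℓ * dist p₁ p₂) :=
            hlip x (closedBall_subset_closedBall hrs hxball)
              p₁ (closedBall_subset_closedBall hδτ hp₁)
              p₂ (closedBall_subset_closedBall hδτ hp₂)
    have hda : ℓ * dist p₁ p₂ ≤ σ' * a := by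
      have h3 : δ * (2 * ℓ) ≤ σ' * a := (le_div_iff₀ (by positivity)).1 hδσ
      nlinarith [mul_le_mul_of_nonneg_left hd12 hℓ.le]
    have hbound2 : exc (F p₁ x) C ≤ ENNReal.ofReal (σ' * a) :=
      hbound.trans (ENNReal.ofReal_le_ofReal hda)
    obtain ⟨z, hzsol, hzd⟩ := errorBound F C pbar xbar δ₂ σ' hσ'
      (hslopeAll σ' hσ'lt) p₁ (hp₁'.trans hδδ₂)
      (hlsc' p₁ (closedBall_subset_closedBall hδδ₁ hp₁))
      a ha0.le x (by simp only [hadef]; linarith) hbound2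
    have hin : EMetric.infEdist x (Solv p₁) ≤ edist x z :=
      EMetric.infEdist_le_edist_of_mem hzsol
    refine hin.trans ?_
    rw [edist_comm]
    have hσ''0 : ENNReal.ofReal σ' ≠ 0 := (ENNReal.ofReal_pos.2 hσ').ne'
    have hzle : edist z x ≤ ENNReal.ofReal (ℓ * dist p₁ p₂) / ENNReal.ofReal σ' := by
      rw [ENNReal.le_div_iff_mul_le (Or.inl hσ''0) (Or.inl ENNReal.ofReal_ne_top),
        mul_comm]
      exact hzd.trans hbound
    refine hzle.trans (le_of_eq ?_)
    rw [← ENNReal.ofReal_div_of_pos hσ']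
    congr 1
    ring
  -- pick one admissible σ'
  obtain ⟨σ₀, hσ₀0, hσ₀1, hσ₀2⟩ := ENNReal.lt_iff_exists_real_btwn.1 hσpos
  have hσ₀pos : 0 < σ₀ := ENNReal.ofReal_pos.1 hσ₀1
  have A0 := AUB σ₀ hσ₀pos hσ₀2
  obtain ⟨hκ, δ, hδ, r, hr, H⟩ := A0
  constructor
  · -- interior
    rw [mem_interior]
    refine ⟨ball pbar δ, ?_, isOpen_ball, mem_ball_self hδ⟩
    intro p hp
    have h := H p (mem_closedBall.2 (mem_ball.1 hp).le) pbar
      (mem_closedBall_self hδ.le) xbar ⟨hsol, mem_closedBall_self hr.le⟩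
    rcases eq_empty_or_nonempty (Solv p) with he | hne
    · rw [he, EMetric.infEdist, Metric.infEDist_empty] at h
      exact absurd (eq_top_iff.2 h) ENNReal.ofReal_ne_top
    · exact hne
  refine ⟨⟨ℓ / σ₀, ⟨hκ, δ, hδ, r, hr, H⟩⟩, ?_⟩
  -- modulus bound
  have hmodle : ∀ σ' : ℝ, 0 < σ' → ENNReal.ofReal σ' < σ →
      aubinMod Solv pbar xbar ≤ ENNReal.ofReal (ℓ / σ') := fun σ' h1 h2 =>
    iInf₂_le (ℓ / σ') (AUB σ' h1 h2)
  by_contra hcon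
  rw [not_le] at hcon
  rcases eq_or_ne σ ∞ with htop | htop
  · rw [htop, ENNReal.div_top] at hcon
    obtain ⟨e, he0, he1, he2⟩ := ENNReal.lt_iff_exists_real_btwn.1 hcon
    have hepos : 0 < e := ENNReal.ofReal_pos.1 he1
    have hval : ℓ / (ℓ / e) = e := by field_simp
    have := hmodle (ℓ / e) (by positivity) (by rw [htop]; exact ENNReal.ofReal_lt_top)
    rw [hval] at this
    exact absurd he2 (not_lt.2 this)
  · have hσt0 : 0 < σ.toReal := ENNReal.toReal_pos hσpos.ne' htop
    have hσeq : ENNReal.ofReal σ.toReal = σ := ENNReal.ofReal_toReal htop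
    have hcon' : ENNReal.ofReal (ℓ / σ.toReal) < aubinMod Solv pbar xbar := by
      rwa [ENNReal.ofReal_div_of_pos hσt0, hσeq]
    obtain ⟨b, hb0, hb1, hb2⟩ := ENNReal.lt_iff_exists_real_btwn.1 hcon'
    have hcb : ℓ / σ.toReal < b := by
      by_contra hle
      exact absurd hb1 (not_lt.2 (ENNReal.ofReal_le_ofReal (not_lt.1 hle)))
    have hbpos : 0 < b := lt_of_le_of_lt (by positivity) hcb
    have hσ'pos : 0 < ℓ / b := by positivity
    have hσ'lt : ENNReal.ofReal (ℓ / b) < σ := by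
      rw [← hσeq]
      refine (ENNReal.ofReal_lt_ofReal_iff hσt0).2 ?_
      rw [div_lt_iff₀ hbpos]
      rw [div_lt_iff₀ hσt0] at hcb
      nlinarith
    have hval : ℓ / (ℓ / b) = b := by field_simp
    have := hmodle (ℓ / b) hσ'pos hσ'lt
    rw [hval] at this
    exact absurd hb2 (not_lt.2 this)
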